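/- Let w be a finite word over alphabet \Gamma with no two equal adjacent letters, of length n \geq 1. Then there is a partition of \Gamma into \Gamma_1 and \Gamma_2 such that the number of positions i with w_i \in \Gamma_1 and w_{i+1} \in \Gamma_2 is at least (n-1)/4. -/

import Mathlib

lemma filt_len {γ : Type*} (l : List γ) (q : γ → Bool) :
    (l.filter q).length = (l.map (fun p => if q p then 1 else 0)).sum := by
  induction l with
  | nil => simp
  | cons a t ih => by_cases h : q a <;> simp [List.filter_cons, h, ih] <;> omega

lemma swap_sum {β γ : Type*} (F : Finset β) (l : List γ) (g : β → γ → ℕ) :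
    ∑ S ∈ F, (l.map (g S)).sum = (l.map (fun p => ∑ S ∈ F, g S p)).sum := by
  induction l with
  | nil => simp
  | cons a t ih => simp [Finset.sum_add_distrib, ih]

lemma zip_tail_chain' {α : Type*} {R : α → α → Prop} :
    ∀ {w : List α}, List.Chain' R w → ∀ p ∈ w.zip w.tail, R p.1 p.2 := by
  intro w
  induction w with
  | nil => simp
  | cons a t ih =>
    cases t with
    | nil => simp
    | cons b t' =>
      intro h p hp
      simp only [List.Chain', List.isChain_cons_cons] at h
      simp only [List.tail_cons, List.zip_cons_cons, List.mem_cons] at hp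
      rcases hp with rfl | hp
      · exact h.1
      · exact ih h.2 p hp

lemma count_aux {α : Type*} [DecidableEq α] (Γ : Finset α) {a b : α} (ha : a ∈ Γ) (hb : b ∈ Γ)
    (hab : a ≠ b) :
    (Γ.powerset.filter (fun S => a ∈ S ∧ b ∉ S)).card = 2 ^ (Γ.card - 2) := by
  have hcard : ((Γ.erase a).erase b).card = Γ.card - 2 := by
    rw [Finset.card_erase_of_mem (Finset.mem_erase.mpr ⟨Ne.symm hab, hb⟩),
      Finset.card_erase_of_mem ha]
    omega
  rw [← hcard, ← Finset.card_powerset]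
  apply Finset.card_bij' (fun S _ => S.erase a) (fun T _ => insert a T)
  · intro S hS
    simp only [Finset.mem_filter] at hS
    exact Finset.insert_erase hS.2.1
  · intro T hT
    simp only [Finset.mem_powerset] at hT
    apply Finset.erase_insert
    intro haT
    exact (Finset.mem_erase.mp (Finset.mem_of_mem_erase (hT haT))).1 rfl
  · intro S hS
    simp only [Finset.mem_filter, Finset.mem_powerset] at hS
    simp only [Finset.mem_powerset]
    intro x hx
    rw [Finset.mem_erase] at hx
    exact Finset.mem_erase.mpr ⟨fun hxb => hS.2.2 (hxb ▸ hx.2), Finset.mem_erase.mpr ⟨hx.1, hS.1 hx.2⟩⟩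
  · intro T hT
    simp only [Finset.mem_powerset] at hT
    simp only [Finset.mem_filter, Finset.mem_powerset]
    refine ⟨?_, Finset.mem_insert_self a T, ?_⟩
    · intro x hx
      rcases Finset.mem_insert.mp hx with rfl | hx
      · exact ha
      · exact Finset.mem_of_mem_erase (Finset.mem_of_mem_erase (hT hx))
    · intro hbmem
      rcases Finset.mem_insert.mp hbmem with h | h
      · exact hab h.symm
      · exact (Finset.mem_erase.mp (hT h)).1 rfl


/-- if `w` is a nonempty word over `Γ` with no two equal adjacent letters,
then some partition of `Γ` into `Γ₁, Γ₂` covers at least `(n-1)/4` of the `n-1`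
adjacent pairs, i.e. `n - 1 ≤ 4 · #covered positions`. -/
theorem stmt_4 {α : Type*} [DecidableEq α] (Γ : Finset α) (w : List α)
    (hlen : 1 ≤ w.length) (hmem : ∀ a ∈ w, a ∈ Γ)
    (hadj : List.Chain' (· ≠ ·) w) :
    ∃ Γ1 Γ2 : Finset α, Disjoint Γ1 Γ2 ∧ Γ1 ∪ Γ2 = Γ ∧
      w.length - 1 ≤
        4 * ((w.zip w.tail).filter fun p => decide (p.1 ∈ Γ1 ∧ p.2 ∈ Γ2)).length := by
  set pairs := w.zip w.tail with hpairs
  -- trivial case: no pairs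
  by_cases hp0 : pairs = []
  · refine ⟨∅, Γ, Finset.disjoint_empty_left Γ, Finset.empty_union Γ, ?_⟩
    have : w.length ≤ 1 := by
      rcases w with _ | ⟨a, t⟩
      · simp
      · rcases t with _ | ⟨b, t'⟩
        · simp
        · simp [hpairs] at hp0
    omega
  -- key facts about pairs
  have hpair_mem : ∀ p ∈ pairs, p.1 ∈ Γ ∧ p.2 ∈ Γ := by
    intro p hp
    have h1 := List.of_mem_zip hp
    exact ⟨hmem _ h1.1, hmem _ (List.mem_of_mem_tail h1.2)⟩
  have hpair_ne : ∀ p ∈ pairs, p.1 ≠ p.2 := zip_tail_chain' hadj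
  -- Γ has at least 2 elements
  obtain ⟨p0, hp0'⟩ := List.exists_mem_of_ne_nil pairs hp0
  have hΓ2 : 2 ≤ Γ.card := by
    have := hpair_mem p0 hp0'
    have := hpair_ne p0 hp0'
    have : ({p0.1, p0.2} : Finset α) ⊆ Γ := by
      intro x hx
      rcases Finset.mem_insert.mp hx with rfl | hx
      · exact (hpair_mem p0 hp0').1
      · exact Finset.mem_singleton.mp hx ▸ (hpair_mem p0 hp0').2
    calc 2 = ({p0.1, p0.2} : Finset α).card := by
            rw [Finset.card_insert_of_notMem (by simp [hpair_ne p0 hp0']), Finset.card_singleton]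
      _ ≤ Γ.card := Finset.card_le_card this
  -- the count function
  set f : Finset α → ℕ := fun S =>
    (pairs.filter fun p => decide (p.1 ∈ S ∧ p.2 ∈ Γ \ S)).length with hf
  -- sum over all subsets
  have hsum : ∑ S ∈ Γ.powerset, f S = pairs.length * 2 ^ (Γ.card - 2) := by
    have : ∀ S, f S = (pairs.map
        (fun p => if (p.1 ∈ S ∧ p.2 ∈ Γ \ S : Prop) then 1 else 0)).sum := by
      intro S
      show (pairs.filter fun p => decide (p.1 ∈ S ∧ p.2 ∈ Γ \ S)).length = _
      rw [filt_len]
      simp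
    simp only [this]
    rw [swap_sum]
    have hone : ∀ p ∈ pairs,
        (∑ S ∈ Γ.powerset, if (p.1 ∈ S ∧ p.2 ∈ Γ \ S : Prop) then 1 else 0) =
          2 ^ (Γ.card - 2) := by
      intro p hp
      have hbool : (∑ S ∈ Γ.powerset, if (p.1 ∈ S ∧ p.2 ∈ Γ \ S : Prop) then 1 else 0)
          = (Γ.powerset.filter fun S => p.1 ∈ S ∧ p.2 ∈ Γ \ S).card := by
        simp [Finset.sum_boole]
      rw [hbool, ← count_aux Γ (hpair_mem p hp).1 (hpair_mem p hp).2 (hpair_ne p hp)]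
      congr 1
      apply Finset.filter_congr
      intro S hS
      simp only [Finset.mem_powerset] at hS
      simp only [Finset.mem_sdiff, eq_iff_iff]
      constructor
      · rintro ⟨h1, _, h2⟩; exact ⟨h1, h2⟩
      · rintro ⟨h1, h2⟩; exact ⟨h1, (hpair_mem p hp).2, h2⟩
    calc (pairs.map fun p => ∑ S ∈ Γ.powerset,
            if (p.1 ∈ S ∧ p.2 ∈ Γ \ S : Prop) then 1 else 0).sum
        = (pairs.map fun _ => 2 ^ (Γ.card - 2)).sum := by
          rw [List.map_congr_left hone]
      _ = pairs.length * 2 ^ (Γ.card - 2) := by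
          rw [List.map_const', List.sum_replicate, smul_eq_mul]
  -- pigeonhole
  have hcard_pow : Γ.powerset.card = 2 ^ Γ.card := Finset.card_powerset Γ
  have hexists : ∃ S ∈ Γ.powerset, pairs.length ≤ 4 * f S := by
    by_contra hcon
    push_neg at hcon
    have hlt : ∑ S ∈ Γ.powerset, 4 * f S < ∑ S ∈ Γ.powerset, pairs.length := by
      apply Finset.sum_lt_sum_of_nonempty
      · exact ⟨∅, Finset.empty_mem_powerset Γ⟩
      · exact hcon
    rw [← Finset.mul_sum, hsum, Finset.sum_const, smul_eq_mul, hcard_pow] at hlt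
    have h4 : 4 * 2 ^ (Γ.card - 2) = 2 ^ Γ.card := by
      have h := Nat.sub_add_cancel hΓ2
      conv_rhs => rw [← h]
      rw [pow_add]
      ring
    rw [show 4 * (pairs.length * 2 ^ (Γ.card - 2))
        = pairs.length * (4 * 2 ^ (Γ.card - 2)) by ring, h4, mul_comm] at hlt
    exact lt_irrefl _ hlt
  obtain ⟨S, hS, hle⟩ := hexists
  refine ⟨S, Γ \ S, Finset.disjoint_sdiff, Finset.union_sdiff_of_subset
    (Finset.mem_powerset.mp hS), ?_⟩
  have hplen : pairs.length = w.length - 1 := by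
    rw [hpairs, List.length_zip, List.length_tail]
    omega
  rw [← hplen]
  exact hle
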